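/- Let a, r be elements of a unital C*-algebra with r ≥ 0, 0 < q, and r·a = q·a·r. Then r^{1/2}·a = q^{1/2}·a·r^{1/2}. -/

import Mathlib

open scoped NNReal

theorem sqrt_q_commute
    {A : Type*} [CStarAlgebra A] [PartialOrder A] [StarOrderedRing A]
    (q : ℝ) (hq : 0 < q) (r a : A) (hr : 0 ≤ r)
    (hcomm : r * a = (q : ℂ) • (a * r)) :
    CFC.sqrt r * a = ((Real.sqrt q : ℝ) : ℂ) • (a * CFC.sqrt r) := by
  have hr' : IsSelfAdjoint r := .of_nonneg hr
  set r2 : A := q • r with hr2def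
  have hr2' : IsSelfAdjoint r2 := (IsSelfAdjoint.all q).smul hr'
  -- rewrite hypothesis with real smul
  have hqs : (q : ℂ) • (a * r) = q • (a * r) := by
    rw [← Complex.coe_algebraMap, algebraMap_smul]
  have hcomm' : r * a = a * r2 := by
    rw [hcomm, hqs, hr2def, mul_smul_comm]
  nontriviality A
  set M : ℝ := max ‖r‖ ‖r2‖ with hM
  set t : Set ℝ := Set.Icc (-M) M with ht
  have hs1 : spectrum ℝ r ⊆ t := by
    intro x hx
    have h1 : ‖x‖ ≤ ‖r‖ := spectrum.norm_le_norm_of_mem hx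
    rw [Real.norm_eq_abs, abs_le] at h1
    constructor
    · linarith [le_max_left ‖r‖ ‖r2‖]
    · linarith [le_max_left ‖r‖ ‖r2‖]
  have hs2 : spectrum ℝ r2 ⊆ t := by
    intro x hx
    have h1 : ‖x‖ ≤ ‖r2‖ := spectrum.norm_le_norm_of_mem hx
    rw [Real.norm_eq_abs, abs_le] at h1
    constructor
    · linarith [le_max_right ‖r‖ ‖r2‖]
    · linarith [le_max_right ‖r‖ ‖r2‖]
  let ι₁ : C(spectrum ℝ r, t) := ⟨Set.inclusion hs1, continuous_inclusion hs1⟩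
  let ι₂ : C(spectrum ℝ r2, t) := ⟨Set.inclusion hs2, continuous_inclusion hs2⟩
  let φ : C(t, ℝ) →⋆ₐ[ℝ] A := (cfcHom hr').comp (ContinuousMap.compStarAlgHom' ℝ ℝ ι₁)
  let ψ : C(t, ℝ) →⋆ₐ[ℝ] A := (cfcHom hr2').comp (ContinuousMap.compStarAlgHom' ℝ ℝ ι₂)
  have hφc : Continuous φ := by
    exact (cfcHom_continuous hr').comp (ContinuousMap.continuous_precomp ι₁)
  have hψc : Continuous ψ := by
    exact (cfcHom_continuous hr2').comp (ContinuousMap.continuous_precomp ι₂)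
  have hid : φ ((ContinuousMap.id ℝ).restrict t) = r ∧
      ψ ((ContinuousMap.id ℝ).restrict t) = r2 := by
    constructor
    · have : (((ContinuousMap.id ℝ).restrict t).comp ι₁) =
        (ContinuousMap.id ℝ).restrict (spectrum ℝ r) := by ext x; rfl
      simp only [φ, StarAlgHom.comp_apply, ContinuousMap.compStarAlgHom'_apply]
      rw [this, cfcHom_id hr']
    · have : (((ContinuousMap.id ℝ).restrict t).comp ι₂) =
        (ContinuousMap.id ℝ).restrict (spectrum ℝ r2) := by ext x; rfl
      simp only [ψ, StarAlgHom.comp_apply, ContinuousMap.compStarAlgHom'_apply]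
      rw [this, cfcHom_id hr2']
  have key : ∀ f : C(t, ℝ), φ f * a = a * ψ f := by
    intro f
    induction f using ContinuousMap.induction_on_of_compact with
    | const c =>
      have h1 : (ContinuousMap.const t c) = algebraMap ℝ C(t, ℝ) c := rfl
      rw [h1, AlgHomClass.commutes, AlgHomClass.commutes]
      exact (Algebra.commutes c a).symm ▸ (Algebra.commutes c a)
    | id => rw [hid.1, hid.2, hcomm']
    | star_id =>
      rw [star_trivial]
      rw [hid.1, hid.2, hcomm']
    | add f g hf hg => rw [map_add, map_add, add_mul, mul_add, hf, hg]
    | mul f g hf hg =>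
      rw [map_mul, map_mul, mul_assoc, hg, ← mul_assoc, hf, mul_assoc]
    | frequently f hf =>
      have hcl : IsClosed {g : C(t, ℝ) | φ g * a = a * ψ g} :=
        isClosed_eq ((continuous_mul_right a).comp hφc)
          ((continuous_mul_left a).comp hψc)
      have := mem_closure_iff_frequently.mpr hf
      exact hcl.closure_subset this
  -- apply to sqrt
  have hsq := key ((⟨Real.sqrt, Real.continuous_sqrt⟩ : C(ℝ, ℝ)).restrict t)
  have hφsq : φ ((⟨Real.sqrt, Real.continuous_sqrt⟩ : C(ℝ, ℝ)).restrict t)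
      = cfc Real.sqrt r := by
    simp only [φ, StarAlgHom.comp_apply, ContinuousMap.compStarAlgHom'_apply]
    rw [cfc_apply Real.sqrt r hr' (Real.continuous_sqrt.continuousOn)]
    exact congrArg _ (by ext x; rfl)
  have hψsq : ψ ((⟨Real.sqrt, Real.continuous_sqrt⟩ : C(ℝ, ℝ)).restrict t)
      = cfc Real.sqrt r2 := by
    simp only [ψ, StarAlgHom.comp_apply, ContinuousMap.compStarAlgHom'_apply]
    rw [cfc_apply Real.sqrt r2 hr2' (Real.continuous_sqrt.continuousOn)]
    exact congrArg _ (by ext x; rfl)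
  rw [hφsq, hψsq] at hsq
  -- CFC.sqrt r = cfc Real.sqrt r
  have hsqrt_eq : ∀ (b : A), 0 ≤ b → CFC.sqrt b = cfc Real.sqrt b := by
    intro b hb
    rw [CFC.sqrt_eq_cfc, cfc_nnreal_eq_real NNReal.sqrt b hb]
    apply cfc_congr
    intro x _
    simp only [Real.sqrt]
  have e2 : cfc Real.sqrt r2 = Real.sqrt q • cfc Real.sqrt r := by
    rw [hr2def, ← cfc_comp_const_mul q Real.sqrt r (by fun_prop) hr']
    rw [show (fun x : ℝ => Real.sqrt (q * x)) = (Real.sqrt <| q * ·) from rfl] at *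
    have : (spectrum ℝ r).EqOn (Real.sqrt <| q * ·) (fun x => Real.sqrt q * Real.sqrt x) := by
      intro x hx
      have hx0 : 0 ≤ x := spectrum_nonneg_of_nonneg hr hx
      simp only
      rw [Real.sqrt_mul hq.le]
    rw [cfc_congr this, cfc_const_mul (Real.sqrt q) Real.sqrt r (by fun_prop)]
  have hq2 : ((Real.sqrt q : ℝ) : ℂ) • (a * CFC.sqrt r) = Real.sqrt q • (a * CFC.sqrt r) := by
    rw [← Complex.coe_algebraMap, algebraMap_smul]
  rw [hq2, hsqrt_eq r hr, hsq, e2, mul_smul_comm]
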